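/- arXiv:1404.2317 — 3 statements merged into one kernel-verified Lean document; each statement's English description precedes it below -/
import Mathlib

section
/- Let Ω₀ = [0,1) ∪ ⋃_{n≥2} [n − 2^{−(n−2)}, n − 2^{−(n−1)}) ⊆ ℝ. Then Ω₀ 2-tiles ℝ with respect to the lattice ℤ, i.e., for almost every x ∈ ℝ, the number of integers m with x − m ∈ Ω₀ equals 2. -/
open MeasureTheory

/-- The set `Ω₀ = [0,1) ∪ ⋃_{n≥2} [n − 2^{−(n−2)}, n − 2^{−(n−1)})`
(here parametrized by `n = m + 2`, `m ∈ ℕ`). -/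
noncomputable def Omega0 : Set ℝ :=
  Set.Ico (0 : ℝ) 1 ∪
    ⋃ m : ℕ, Set.Ico ((m + 2 : ℝ) - 2 ^ (-(m : ℤ))) ((m + 2 : ℝ) - 2 ^ (-(m : ℤ) - 1))

lemma omega0_key (x : ℝ) : {m : ℤ | x - (m : ℝ) ∈ Omega0}.ncard = 2 := by
  set f : ℝ := Int.fract x with hfdef
  have hf0 : 0 ≤ f := Int.fract_nonneg x
  have hf1 : f < 1 := Int.fract_lt_one x
  set r : ℝ := 1 - f with hrdef
  have hr0 : 0 < r := by linarith
  have hr1 : r ≤ 1 := by linarith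
  have hclog_le : Int.clog 2 r ≤ 0 := by
    rw [← Int.le_zpow_iff_clog_le (by norm_num) hr0]
    simpa using hr1
  set k : ℕ := (-Int.clog 2 r).toNat with hkdef
  have hk : -(k : ℤ) = Int.clog 2 r := by
    rw [hkdef, Int.toNat_of_nonneg (by omega)]; ring
  have hupper : r ≤ (2 : ℝ) ^ (-(k : ℤ)) := by
    rw [hk]; exact_mod_cast Int.self_le_zpow_clog (by norm_num) r
  have hlower : (2 : ℝ) ^ (-(k : ℤ) - 1) < r := by
    have := Int.zpow_pred_clog_lt_self (R := ℝ) (b := 2) (by norm_num) hr0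
    rw [hk]; exact_mod_cast this
  -- the two elements
  have hsub : ∀ j : ℕ, x - ((⌊x⌋ : ℤ) - j - 1 : ℤ) = f + j + 1 := by
    intro j
    rw [hfdef, Int.fract]
    push_cast
    ring
  have hset : {m : ℤ | x - (m : ℝ) ∈ Omega0} = {(⌊x⌋ : ℤ) - k - 1, ⌊x⌋} := by
    ext m
    simp only [Set.mem_setOf_eq, Omega0, Set.mem_union, Set.mem_iUnion, Set.mem_Ico,
      Set.mem_insert_iff, Set.mem_singleton_iff]
    constructor
    · rintro (⟨h1, h2⟩ | ⟨j, h1, h2⟩)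
      · right
        have : ⌊x⌋ = m := by
          rw [show x = (x - m) + m by ring, Int.floor_add_intCast, Int.floor_eq_zero_iff.2 ⟨h1, h2⟩]
          simp
        omega
      · left
        have hj1 : (0:ℝ) < (2:ℝ) ^ (-(j:ℤ) - 1) := by positivity
        have hj2 : (2:ℝ) ^ (-(j:ℤ)) ≤ 1 := by
          apply zpow_le_one_of_nonpos₀ (by norm_num)
          omega
        have hfloor : ⌊x - (m:ℝ)⌋ = (j : ℤ) + 1 := by
          apply Int.floor_eq_iff.2
          constructor <;> push_cast <;> [linarith; linarith]
        have hxm : ⌊x⌋ = m + j + 1 := by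
          have : ⌊x - (m:ℝ)⌋ = ⌊x⌋ - m := by
            rw [show x - (m:ℝ) = x + (-m : ℤ) by push_cast; ring, Int.floor_add_intCast]; ring
          omega
        have hfract : f = x - m - j - 1 := by
          rw [hfdef, Int.fract, hxm]; push_cast; ring
        -- bounds on r give j = k
        have hrj1 : r ≤ (2:ℝ) ^ (-(j:ℤ)) := by rw [hrdef, hfract]; linarith
        have hrj2 : (2:ℝ) ^ (-(j:ℤ) - 1) < r := by rw [hrdef, hfract]; linarith
        have hjk : j = k := by
          by_contra hne
          rcases Nat.lt_or_ge j k with h | h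
          · have : (2:ℝ) ^ (-(k:ℤ)) ≤ (2:ℝ) ^ (-(j:ℤ) - 1) := by
              apply zpow_le_zpow_right₀ (by norm_num); omega
            linarith
          · have hk' : j > k := by omega
            have : (2:ℝ) ^ (-(j:ℤ)) ≤ (2:ℝ) ^ (-(k:ℤ) - 1) := by
              apply zpow_le_zpow_right₀ (by norm_num); omega
            linarith
        omega
    · rintro (rfl | rfl)
      · right
        refine ⟨k, ?_, ?_⟩ <;> rw [hsub k] <;>
          [linarith [hupper]; linarith [hlower]]
      · left
        have hxf : x - (⌊x⌋ : ℝ) = f := by rw [hfdef, Int.fract]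
        exact ⟨by rw [hxf]; exact hf0, by rw [hxf]; exact hf1⟩
  rw [hset]
  rw [Set.ncard_pair (by omega)]

/-- `Ω₀` 2-tiles `ℝ` with respect to the lattice `ℤ`. -/
theorem Omega0_two_tiles :
    ∀ᵐ x ∂(volume : Measure ℝ), {m : ℤ | x - (m : ℝ) ∈ Omega0}.ncard = 2 := by
  exact Filter.Eventually.of_forall omega0_key
end

section
/- Let Λ be a full-rank lattice in ℝ^d and Ω ⊆ ℝ^d a bounded measurable set that k-tiles ℝ^d by Λ. Then for Lebesgue-almost every k-tuple (a₁,…,a_k) ∈ (ℝ^d)^k the following holds: for almost every ω in a fundamental domain D of ℝ^d/Λ, with λ₁(ω),…,λ_k(ω) the k elements of Λ such that ω + λ_j(ω) ∈ Ω, the k×k matrix E with entries E_{j,l} = e^{2πi⟨a_l, λ_j(ω)⟩} is invertible. -/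
open MeasureTheory

section Aux

open Complex Finset

/-- 1-D: a nontrivial finite linear combination of exponentials `t ↦ exp (x s * t)`
with pairwise distinct `x s` has countable real zero set. -/
lemma countable_zero_exp {ι : Type*} [Fintype ι] (c : ι → ℂ) (x : ι → ℂ)
    (hx : Function.Injective x) (hc : ∃ s, c s ≠ 0) :
    {t : ℝ | (∑ s, c s * Complex.exp (x s * t)) = 0}.Countable := by
  classical
  set G : ℂ → ℂ := fun z => ∑ s, c s * Complex.exp (x s * z) with hG
  have hGd : Differentiable ℂ G := by
    apply Differentiable.fun_sum
    intro s _
    exact (differentiable_const _).mul ((differentiable_id.const_mul (x s)).cexp)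
  have hGne : ∃ z, G z ≠ 0 := by
    by_contra hcon
    push_neg at hcon
    -- characters
    let χ : ι → (Multiplicative ℂ →* ℂ) := fun s =>
      { toFun := fun z => Complex.exp (x s * z.toAdd)
        map_one' := by simp
        map_mul' := fun a b => by
          simp [mul_add, Complex.exp_add] }
    have hχinj : Function.Injective χ := by
      intro s s' hss
      apply hx
      have h1 : ∀ z : ℂ, Complex.exp (x s * z) = Complex.exp (x s' * z) := by
        intro z
        exact DFunLike.congr_fun hss (Multiplicative.ofAdd z)
      have d1 : HasDerivAt (fun z : ℂ => Complex.exp (x s * z))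
          (Complex.exp (x s * 0) * (x s * 1)) 0 :=
        ((hasDerivAt_id (0:ℂ)).const_mul (x s)).cexp
      have d2 : HasDerivAt (fun z : ℂ => Complex.exp (x s * z))
          (Complex.exp (x s' * 0) * (x s' * 1)) 0 := by
        have : (fun z : ℂ => Complex.exp (x s * z)) =
            (fun z : ℂ => Complex.exp (x s' * z)) := funext h1
        rw [this]
        exact ((hasDerivAt_id (0:ℂ)).const_mul (x s')).cexp
      have := d1.unique d2
      simpa using this
    have li := (linearIndependent_monoidHom (Multiplicative ℂ) ℂ).comp χ hχinj
    have hzero : (∑ s : ι, c s • ((fun f : Multiplicative ℂ →* ℂ => (f : Multiplicative ℂ → ℂ)) ∘ χ) s) = 0 := by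
      funext z
      have hz := hcon z.toAdd
      simp only [Finset.sum_apply, Pi.smul_apply, Function.comp_apply, χ, MonoidHom.coe_mk,
        OneHom.coe_mk, smul_eq_mul, Pi.zero_apply]
      exact hz
    obtain ⟨s, hs⟩ := hc
    exact hs (Fintype.linearIndependent_iff.mp li c hzero s)
  have hGa : AnalyticOnNhd ℂ G Set.univ := analyticOnNhd_univ_iff_differentiable.mpr hGd
  rcases hGa.eqOn_zero_or_eventually_ne_zero_of_preconnected isPreconnected_univ with hcase | hcase
  · obtain ⟨z, hz⟩ := hGne
    exact absurd (hcase (Set.mem_univ z)) hz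
  · have hmem : {z | G z ≠ 0} ∈ Filter.codiscreteWithin (Set.univ : Set ℂ) := hcase
    have hdisc : IsClosed {z : ℂ | G z = 0} ∧ DiscreteTopology {z : ℂ | G z = 0} := by
      rw [← isDiscrete_iff_discreteTopology, isClosed_and_discrete_iff]
      intro z
      have h2 := mem_codiscreteWithin.mp hmem z (Set.mem_univ z)
      have : Set.univ \ {z | G z ≠ 0} = {z : ℂ | G z = 0} := by
        ext w; simp
      rwa [this] at h2
    have : Countable {z : ℂ | G z = 0} := by
      have := hdisc.2
      exact TopologicalSpace.separableSpace_iff_countable.mp inferInstance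
    have hcount : ({z : ℂ | G z = 0}).Countable := Set.countable_coe_iff.mp this
    have hsub : {t : ℝ | (∑ s, c s * Complex.exp (x s * t)) = 0} ⊆
        (fun t : ℝ => (t : ℂ)) ⁻¹' {z : ℂ | G z = 0} := fun t ht => ht
    exact (hcount.preimage Complex.ofReal_injective).mono hsub

/-- Fubini slicing on `Fin k → Fin d → ℝ`. -/
lemma ae_ne_zero_of_slices {k d : ℕ} {f : (Fin k → Fin d → ℝ) → ℂ} (hf : Continuous f)
    (u : Fin k → Fin d → ℝ)
    (h : ∀ b, volume {t : ℝ | f (b + t • u) = 0} = 0) :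
    ∀ᵐ a : Fin k → Fin d → ℝ, f a ≠ 0 := by
  set Z : Set (Fin k → Fin d → ℝ) := f ⁻¹' {0} with hZ
  have hZc : IsClosed Z := isClosed_singleton.preimage hf
  have hZm : MeasurableSet Z := hZc.measurableSet
  have hcont : Continuous (fun p : ℝ × (Fin k → Fin d → ℝ) => p.2 + p.1 • u) :=
    continuous_snd.add (continuous_fst.smul continuous_const)
  have hmeas : Measurable fun p : ℝ × (Fin k → Fin d → ℝ) =>
      Z.indicator (1 : (Fin k → Fin d → ℝ) → ENNReal) (p.2 + p.1 • u) :=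
    (measurable_const.indicator hZm).comp hcont.measurable
  have swap := lintegral_lintegral_swap (μ := (volume : Measure ℝ))
    (ν := (volume : Measure (Fin k → Fin d → ℝ)))
    (f := fun t b => Z.indicator (1 : (Fin k → Fin d → ℝ) → ENNReal) (b + t • u)) hmeas.aemeasurable
  have hL : ∀ t : ℝ, (∫⁻ b, Z.indicator (1 : (Fin k → Fin d → ℝ) → ENNReal) (b + t • u)) = volume Z := by
    intro t
    have hpre : ∀ b : Fin k → Fin d → ℝ,
        Z.indicator (1 : (Fin k → Fin d → ℝ) → ENNReal) (b + t • u) =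
        ((· + t • u) ⁻¹' Z).indicator (1 : (Fin k → Fin d → ℝ) → ENNReal) b := by
      intro b
      rfl
    simp_rw [hpre]
    rw [lintegral_indicator_one (hZm.preimage (measurable_add_const _))]
    exact measure_preimage_add_right _ _ _
  have hR : ∀ b : Fin k → Fin d → ℝ,
      (∫⁻ t : ℝ, Z.indicator (1 : (Fin k → Fin d → ℝ) → ENNReal) (b + t • u)) = 0 := by
    intro b
    have hpre : ∀ t : ℝ,
        Z.indicator (1 : (Fin k → Fin d → ℝ) → ENNReal) (b + t • u) =
        ((fun t : ℝ => b + t • u) ⁻¹' Z).indicator (1 : ℝ → ENNReal) t := by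
      intro t
      rfl
    have hcurve : Continuous (fun t : ℝ => b + t • u) :=
      continuous_const.add (continuous_id.smul continuous_const)
    simp_rw [hpre]
    rw [lintegral_indicator_one (hZm.preimage hcurve.measurable)]
    have : (fun t : ℝ => b + t • u) ⁻¹' Z = {t : ℝ | f (b + t • u) = 0} := by
      ext t; simp [hZ, Set.mem_preimage]
    rw [this]
    exact h b
  simp_rw [hL, hR] at swap
  rw [lintegral_const, lintegral_zero] at swap
  have hvol : volume Z = 0 := by
    rcases mul_eq_zero.mp swap with h' | h'
    · exact h'
    · simp [Real.volume_univ] at h'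
  rw [ae_iff]
  convert hvol using 2
  ext a
  simp [hZ, Set.mem_preimage]

end Aux

section Top

open Complex Finset

lemma two_pi_I_ne_zero' : (2 * (Real.pi : ℂ) * Complex.I) ≠ 0 :=
  mul_ne_zero (mul_ne_zero two_ne_zero (Complex.ofReal_ne_zero.mpr Real.pi_ne_zero))
    Complex.I_ne_zero

lemma ae_det_ne_zero {k d : ℕ} (lam : Fin k → Fin d → ℝ) (hinj : Function.Injective lam) :
    ∀ᵐ a : Fin k → Fin d → ℝ,
      (Matrix.of fun j l : Fin k =>
        Complex.exp (2 * Real.pi * Complex.I * ((∑ i, a l i * lam j i : ℝ) : ℂ))).det ≠ 0 := by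
  classical
  set c : Equiv.Perm (Fin k) → ℂ := fun σ => ((Equiv.Perm.sign σ : ℤ) : ℂ) with hc
  set F : (Fin k → Fin d → ℝ) → ℂ := fun a =>
    ∑ σ : Equiv.Perm (Fin k), c σ *
      Complex.exp (2 * Real.pi * Complex.I *
        ((∑ l, ∑ i, a l i * lam (σ l) i : ℝ) : ℂ)) with hF
  have hdet : ∀ a : Fin k → Fin d → ℝ,
      (Matrix.of fun j l : Fin k =>
        Complex.exp (2 * Real.pi * Complex.I * ((∑ i, a l i * lam j i : ℝ) : ℂ))).det = F a := by
    intro a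
    rw [Matrix.det_apply, hF]
    refine Finset.sum_congr rfl fun σ _ => ?_
    have hprod : (∏ l, Complex.exp (2 * Real.pi * Complex.I *
        ((∑ i, a l i * lam (σ l) i : ℝ) : ℂ))) =
        Complex.exp (2 * Real.pi * Complex.I *
          ((∑ l, ∑ i, a l i * lam (σ l) i : ℝ) : ℂ)) := by
      rw [← Complex.exp_sum, ← Finset.mul_sum]
      norm_cast
    simp only [Matrix.of_apply, hprod, Units.smul_def, zsmul_eq_mul, hc]
  -- nonequality of permuted tuples
  have hwne : ∀ σ τ : Equiv.Perm (Fin k), σ ≠ τ → ∃ l, lam (σ l) ≠ lam (τ l) := by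
    intro σ τ hστ
    by_contra hcc
    push_neg at hcc
    exact hστ (Equiv.ext fun l => hinj (hcc l))
  -- choose a generic direction u
  obtain ⟨u, hu⟩ : ∃ u : Fin k → Fin d → ℝ, ∀ σ τ : Equiv.Perm (Fin k), σ ≠ τ →
      (∑ l, ∑ i, u l i * lam (σ l) i) ≠ ∑ l, ∑ i, u l i * lam (τ l) i := by
    by_contra hcon
    push_neg at hcon
    set L : (Fin k → Fin d → ℝ) → ((Fin k → Fin d → ℝ) →ₗ[ℝ] ℝ) := fun w =>
      { toFun := fun v => ∑ l, ∑ i, v l i * w l i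
        map_add' := fun v v' => by
          simp [add_mul, Finset.sum_add_distrib]
        map_smul' := fun r v => by
          simp [Finset.mul_sum, mul_assoc] } with hL
    set Ksub : {p : Equiv.Perm (Fin k) × Equiv.Perm (Fin k) // p.1 ≠ p.2} →
        Subspace ℝ (Fin k → Fin d → ℝ) := fun p =>
      LinearMap.ker (L (fun l => lam (p.1.1 l) - lam (p.1.2 l))) with hK
    have hcover : ⋃ p, (Ksub p : Set (Fin k → Fin d → ℝ)) = Set.univ := by
      ext u
      simp only [Set.mem_univ, iff_true, Set.mem_iUnion]
      obtain ⟨σ, τ, hστ, he⟩ := hcon u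
      refine ⟨⟨(σ, τ), hστ⟩, ?_⟩
      show u ∈ LinearMap.ker _
      rw [LinearMap.mem_ker]
      show (∑ l, ∑ i, u l i * ((fun l => lam (σ l) - lam (τ l)) l) i) = 0
      simp only [Pi.sub_apply, mul_sub, Finset.sum_sub_distrib]
      rw [he]
      ring
    obtain ⟨p, hp⟩ := Subspace.exists_eq_top_of_iUnion_eq_univ hcover
    set w : Fin k → Fin d → ℝ := fun l => lam (p.1.1 l) - lam (p.1.2 l) with hw
    have hwmem : w ∈ Ksub p := by rw [hp]; exact Submodule.mem_top
    have hzero : (∑ l, ∑ i, w l i * w l i) = 0 := hwmem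
    obtain ⟨l0, hl0⟩ := hwne p.1.1 p.1.2 p.2
    have hw0 : w l0 ≠ 0 := by
      rw [hw]
      exact sub_ne_zero.mpr hl0
    obtain ⟨i0, hi0⟩ : ∃ i, w l0 i ≠ 0 := by
      by_contra hcc
      push_neg at hcc
      exact hw0 (funext hcc)
    have hterm := (Finset.sum_eq_zero_iff_of_nonneg
      (fun l _ => Finset.sum_nonneg (fun i _ => mul_self_nonneg (w l i)))).mp hzero l0
      (Finset.mem_univ _)
    have h2 := (Finset.sum_eq_zero_iff_of_nonneg
      (fun i _ => mul_self_nonneg (w l0 i))).mp hterm i0 (Finset.mem_univ _)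
    exact hi0 (mul_self_eq_zero.mp h2)
  -- F is continuous
  have hFc : Continuous F := by
    apply continuous_finset_sum
    intro σ _
    apply continuous_const.mul
    apply Complex.continuous_exp.comp
    apply continuous_const.mul
    apply Complex.continuous_ofReal.comp
    apply continuous_finset_sum
    intro l _
    apply continuous_finset_sum
    intro i _
    exact (continuous_apply_apply l i).mul continuous_const
  -- slices
  have hslice : ∀ b : Fin k → Fin d → ℝ, volume {t : ℝ | F (b + t • u) = 0} = 0 := by
    intro b
    set c' : Equiv.Perm (Fin k) → ℂ := fun σ => c σ *
      Complex.exp (2 * Real.pi * Complex.I *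
        ((∑ l, ∑ i, b l i * lam (σ l) i : ℝ) : ℂ)) with hc'
    set x : Equiv.Perm (Fin k) → ℂ := fun σ =>
      2 * Real.pi * Complex.I * ((∑ l, ∑ i, u l i * lam (σ l) i : ℝ) : ℂ) with hx
    have hFt : ∀ t : ℝ, F (b + t • u) = ∑ σ, c' σ * Complex.exp (x σ * t) := by
      intro t
      rw [hF]
      refine Finset.sum_congr rfl fun σ _ => ?_
      have hreal : (∑ l, ∑ i, (b + t • u) l i * lam (σ l) i) =
          (∑ l, ∑ i, b l i * lam (σ l) i) + (∑ l, ∑ i, u l i * lam (σ l) i) * t := by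
        simp only [Pi.add_apply, Pi.smul_apply, smul_eq_mul, add_mul, Finset.sum_add_distrib,
          Finset.sum_mul, Finset.mul_sum]
        congr 1
        exact Finset.sum_congr rfl fun l _ => Finset.sum_congr rfl fun i _ => by ring
      rw [hreal, hc', hx]
      push_cast
      rw [mul_add, Complex.exp_add]
      ring
    have hset : {t : ℝ | F (b + t • u) = 0} =
        {t : ℝ | (∑ σ, c' σ * Complex.exp (x σ * t)) = 0} := by
      ext t
      simp only [Set.mem_setOf_eq, hFt t]
    rw [hset]
    apply Set.Countable.measure_zero
    apply countable_zero_exp c' x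
    · intro σ τ hxy
      by_contra hne
      rw [hx] at hxy
      exact hu σ τ hne (by exact_mod_cast mul_left_cancel₀ two_pi_I_ne_zero' hxy)
    · refine ⟨1, mul_ne_zero ?_ (Complex.exp_ne_zero _)⟩
      simp [hc]
  have hae := ae_ne_zero_of_slices hFc u hslice
  filter_upwards [hae] with a ha
  rw [hdet a]
  exact ha

end Top

/-- Let `Λ` be a full-rank lattice in `ℝ^d` (a discrete subgroup
with a bounded measurable fundamental domain `D`) and `Ω` a bounded measurable set
that `k`-tiles `ℝ^d` by `Λ`.  Then for Lebesgue-a.e. `k`-tuple `(a₁,…,a_k)` the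
following holds: for a.e. `ω ∈ D`, for any enumeration `λ₁(ω),…,λ_k(ω)` of the `k`
elements of `Λ` with `ω + λ_j(ω) ∈ Ω`, the matrix `(e^{2πi⟨a_l, λ_j(ω)⟩})_{j,l}`
is invertible. -/
theorem ae_tuple_matrix_invertible
    {d : ℕ} (Λ : AddSubgroup (Fin d → ℝ)) [DiscreteTopology Λ]
    (D : Set (Fin d → ℝ)) (hDm : MeasurableSet D) (hDb : Bornology.IsBounded D)
    (hfund : ∀ x : Fin d → ℝ, ∃! p : (Fin d → ℝ) × (Fin d → ℝ),
      p.1 ∈ D ∧ p.2 ∈ Λ ∧ x = p.1 + p.2)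
    (Ω : Set (Fin d → ℝ)) (hΩm : MeasurableSet Ω) (hΩb : Bornology.IsBounded Ω)
    (k : ℕ)
    (htile : ∀ᵐ x ∂(volume : Measure (Fin d → ℝ)),
      {l : Fin d → ℝ | l ∈ Λ ∧ x - l ∈ Ω}.ncard = k) :
    ∀ᵐ a ∂(volume : Measure (Fin k → Fin d → ℝ)),
      ∀ᵐ ω ∂(volume.restrict D),
        ∀ lam : Fin k → (Fin d → ℝ), Function.Injective lam →
          (∀ j, lam j ∈ Λ ∧ ω + lam j ∈ Ω) →
          (Matrix.of fun j l : Fin k =>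
            Complex.exp (2 * Real.pi * Complex.I * ((∑ i, a l i * lam j i : ℝ) : ℂ))).det ≠ 0 := by
  classical
  have hΛcount : Countable Λ :=
    TopologicalSpace.separableSpace_iff_countable.mp inferInstance
  set T : Set (Fin k → Fin d → ℝ) :=
    Set.range (fun g : Fin k → Λ => fun j => ((g j : Fin d → ℝ))) with hT
  have hTc : T.Countable := Set.countable_range _
  have key : ∀ᵐ a : Fin k → Fin d → ℝ, ∀ lam ∈ T, Function.Injective lam →
      (Matrix.of fun j l : Fin k =>
        Complex.exp (2 * Real.pi * Complex.I * ((∑ i, a l i * lam j i : ℝ) : ℂ))).det ≠ 0 := by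
    rw [MeasureTheory.ae_ball_iff hTc]
    intro lam _
    by_cases hinj : Function.Injective lam
    · filter_upwards [ae_det_ne_zero lam hinj] with a ha _
      exact ha
    · exact MeasureTheory.ae_of_all _ fun a h => absurd h hinj
  filter_upwards [key] with a ha
  apply MeasureTheory.ae_of_all
  intro ω lam hlaminj hprop
  exact ha lam ⟨fun j => ⟨lam j, (hprop j).1⟩, rfl⟩ hlaminj
end

section
/- Let G be an LCA group, H a uniform lattice in G with dual lattice Λ ⊆ Ĝ, and D a measurable fundamental domain of Ĝ/Λ. Then the map T : L²(G) → L²(D, ℓ²(Λ)) defined by (T f)(ω) = (f̂(ω + λ))_{λ∈Λ} is a well-defined isometric isomorphism; moreover, for each h ∈ H, T(τ_h f)(ω) = e_h(ω) · (T f)(ω) for almost every ω ∈ D, where e_h(ω) = ω(h) and τ_h f(x) = f(x − h). -/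
open MeasureTheory ComplexConjugate

/-- **fiberization map, stated on the Fourier side.**
Let `Γ = Ĝ` be an LCA group, `Λ ⊆ Γ` the countable uniform dual lattice of a uniform
lattice `H ⊆ G`, and `D` a measurable fundamental domain of `Γ/Λ`.  The map
`T : L²(Γ) → L²(D, ℓ²(Λ))`, `(T F)(ω) = (F(ω+λ))_{λ∈Λ}` (which is the map
`T : L²(G) → L²(D, ℓ²(Λ))`, `f ↦ (f̂(ω+λ))_λ`, composed with the inverse Fourier
transform) is a well-defined isometric isomorphism:
(1) it is isometric; (2) it is surjective onto `L²(D, ℓ²(Λ))`; and moreover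
(3) multiplication by a character `e` of `Γ` trivial on `Λ` (i.e. an `e_h`, `h ∈ H`)
acts on fibers as multiplication by the scalar `e(ω)`. -/
theorem fiberization_isometric_isomorphism
    {Γ : Type*} [AddCommGroup Γ] [TopologicalSpace Γ] [IsTopologicalAddGroup Γ]
    [LocallyCompactSpace Γ] [T2Space Γ] [MeasurableSpace Γ] [BorelSpace Γ]
    (μ : Measure Γ) [μ.IsAddHaarMeasure]
    (Λ : AddSubgroup Γ) [DiscreteTopology Λ] [Countable Λ] [CompactSpace (Γ ⧸ Λ)]
    (D : Set Γ) (hDm : MeasurableSet D)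
    (hfund : ∀ x : Γ, ∃! p : Γ × Γ, p.1 ∈ D ∧ p.2 ∈ Λ ∧ x = p.1 + p.2) :
    -- (1) isometry
    (∀ F : Γ → ℂ, MemLp F 2 μ →
      ∫ x, ‖F x‖ ^ 2 ∂μ = ∫ ω in D, (∑' l : Λ, ‖F (ω + (l : Γ))‖ ^ 2) ∂μ) ∧
    -- (2) surjectivity onto `L²(D, ℓ²(Λ))`
    (∀ Φ : Γ → Λ → ℂ, (∀ l, Measurable fun ω => Φ ω l) →
      (∫⁻ ω in D, ∑' l : Λ, ((‖Φ ω l‖₊ : ENNReal) ^ 2) ∂μ) < ⊤ →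
      ∃ F : Γ → ℂ, MemLp F 2 μ ∧
        ∀ᵐ ω ∂(μ.restrict D), ∀ l : Λ, F (ω + (l : Γ)) = Φ ω l) ∧
    -- (3) `T` intertwines multiplication by `Λ`-periodic characters with
    -- scalar multiplication by `e(ω)` on the fiber over `ω`
    (∀ e : Γ → ℂ,
      (Continuous e ∧ (∀ x, ‖e x‖ = 1) ∧ (∀ x y, e (x + y) = e x * e y) ∧
        ∀ l ∈ Λ, e l = 1) →
      ∀ F : Γ → ℂ, ∀ᵐ ω ∂(μ.restrict D), ∀ l : Λ,
        e (ω + (l : Γ)) * F (ω + (l : Γ)) = e ω * F (ω + (l : Γ))) := by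
  classical
  -- uniqueness of the decomposition
  have huniq : ∀ d l d' l' : Γ, d ∈ D → l ∈ Λ → d' ∈ D → l' ∈ Λ →
      d + l = d' + l' → d = d' ∧ l = l' := by
    intro d l d' l' hd hl hd' hl' he
    obtain ⟨p, -, hu⟩ := hfund (d + l)
    have h1 := hu (d, l) ⟨hd, hl, rfl⟩
    have h2 := hu (d', l') ⟨hd', hl', he⟩
    have h3 : (d, l) = (d', l') := h1.trans h2.symm
    exact ⟨congrArg Prod.fst h3, congrArg Prod.snd h3⟩
  choose P hPD hPΛ hPx using fun x => (hfund x).exists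
  have hPkey : ∀ ω ∈ D, ∀ l ∈ Λ, P (ω + l) = (ω, l) := by
    intro ω hω l hl
    obtain ⟨h1, h2⟩ := huniq _ _ ω l (hPD _) (hPΛ _) hω hl (hPx (ω + l)).symm
    exact Prod.ext h1 h2
  -- D is a fundamental domain
  have hfd : IsAddFundamentalDomain Λ D μ := by
    refine ⟨hDm.nullMeasurableSet, Filter.Eventually.of_forall fun x => ?_, ?_⟩
    · refine ⟨⟨-(P x).2, neg_mem (hPΛ x)⟩, ?_⟩
      show -(P x).2 + x ∈ D
      have h2 : -(P x).2 + x = (P x).1 := by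
        calc -(P x).2 + x = -(P x).2 + ((P x).1 + (P x).2) := by rw [← hPx x]
          _ = (P x).1 := by abel
      rw [h2]; exact hPD x
    · intro l l' hne
      refine (Set.disjoint_left.mpr ?_).aedisjoint
      intro x h1 h2
      rw [Set.mem_vadd_set] at h1 h2
      obtain ⟨d, hd, rfl⟩ := h1
      obtain ⟨d', hd', he⟩ := h2
      have he' : d' + (l' : Γ) = d + (l : Γ) := by
        have : (l' : Γ) + d' = (l : Γ) + d := he
        rw [add_comm d', add_comm d]; exact this
      obtain ⟨-, h2⟩ := huniq d' l' d l hd' l'.2 hd l.2 he'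
      exact hne.symm (Subtype.ext h2)
  -- translations are quasi-measure-preserving from μ.restrict D to μ
  have hQMP : ∀ l : Λ, Measure.QuasiMeasurePreserving
      (fun ω : Γ => ω + (l : Γ)) (μ.restrict D) μ := by
    intro l
    refine ⟨measurable_add_const _, Measure.absolutelyContinuous_of_le ?_⟩
    calc Measure.map (· + (l : Γ)) (μ.restrict D)
        ≤ Measure.map (· + (l : Γ)) μ :=
          Measure.map_mono Measure.restrict_le_self (measurable_add_const _)
      _ = μ := map_add_right_eq_self μ _
  -- the key lintegral identity
  have hkey : ∀ F : Γ → ℂ, AEMeasurable F μ →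
      ∫⁻ x, ((‖F x‖₊ : ENNReal)) ^ 2 ∂μ
        = ∫⁻ ω in D, ∑' l : Λ, ((‖F (ω + (l : Γ))‖₊ : ENNReal)) ^ 2 ∂μ := by
    intro F hFm
    calc ∫⁻ x, ((‖F x‖₊ : ENNReal)) ^ 2 ∂μ
        = ∑' l : Λ, ∫⁻ ω in D, ((‖F ((l : Γ) + ω)‖₊ : ENNReal)) ^ 2 ∂μ :=
          hfd.lintegral_eq_tsum'' _
      _ = ∑' l : Λ, ∫⁻ ω in D, ((‖F (ω + (l : Γ))‖₊ : ENNReal)) ^ 2 ∂μ := by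
          refine tsum_congr fun l => lintegral_congr fun ω => by rw [add_comm]
      _ = ∫⁻ ω in D, ∑' l : Λ, ((‖F (ω + (l : Γ))‖₊ : ENNReal)) ^ 2 ∂μ :=
          (lintegral_tsum fun l =>
            (hFm.enorm.pow_const 2).comp_quasiMeasurePreserving (hQMP l)).symm
  -- Memℒp characterization for p = 2
  have hmem : ∀ F : Γ → ℂ, AEStronglyMeasurable F μ →
      (MemLp F 2 μ ↔ ∫⁻ x, ((‖F x‖₊ : ENNReal)) ^ 2 ∂μ < ⊤) := by
    intro F hFsm
    have h2 : (fun x => (‖F x‖₊ : ENNReal) ^ ((2 : ENNReal)).toReal)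
        = fun x => ((‖F x‖₊ : ENNReal)) ^ 2 := by
      funext x
      rw [ENNReal.toReal_ofNat, ← ENNReal.rpow_natCast]
      norm_num
    constructor
    · intro h
      have := (eLpNorm_lt_top_iff_lintegral_rpow_enorm_lt_top
        (two_ne_zero) (ENNReal.ofNat_ne_top)).mp h.2
      simp only [enorm_eq_nnnorm] at this
      rwa [h2] at this
    · intro h
      refine ⟨hFsm, ?_⟩
      rw [eLpNorm_lt_top_iff_lintegral_rpow_enorm_lt_top
        (two_ne_zero) (ENNReal.ofNat_ne_top)]
      simp only [enorm_eq_nnnorm]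
      rw [h2]
      exact h
  refine ⟨?_, ?_, ?_⟩
  · -- (1) isometry
    intro F hF
    have hg : AEMeasurable (fun x => ((‖F x‖₊ : ENNReal)) ^ 2) μ :=
      hF.1.aemeasurable.enorm.pow_const 2
    have hfin := (hmem F hF.1).mp hF
    have hk := hkey F hF.1.aemeasurable
    have hGm : AEMeasurable
        (fun ω => ∑' l : Λ, ((‖F (ω + (l : Γ))‖₊ : ENNReal)) ^ 2) (μ.restrict D) :=
      AEMeasurable.ennreal_tsum fun l =>
        (hF.1.aemeasurable.enorm.pow_const 2).comp_quasiMeasurePreserving (hQMP l)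
    have hGfin : ∀ᵐ ω ∂(μ.restrict D),
        (∑' l : Λ, ((‖F (ω + (l : Γ))‖₊ : ENNReal)) ^ 2) < ⊤ :=
      ae_lt_top' hGm (by rw [← hk]; exact hfin.ne)
    calc ∫ x, ‖F x‖ ^ 2 ∂μ
        = (∫⁻ x, ((‖F x‖₊ : ENNReal)) ^ 2 ∂μ).toReal := by
          rw [← integral_toReal hg
            (Filter.Eventually.of_forall fun x =>
              ENNReal.pow_lt_top ENNReal.coe_lt_top)]
          refine integral_congr_ae (Filter.Eventually.of_forall fun x => ?_)
          simp [ENNReal.toReal_pow]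
      _ = (∫⁻ ω in D, ∑' l : Λ, ((‖F (ω + (l : Γ))‖₊ : ENNReal)) ^ 2 ∂μ).toReal := by
          rw [hk]
      _ = ∫ ω in D, (∑' l : Λ, ‖F (ω + (l : Γ))‖ ^ 2) ∂μ := by
          rw [← integral_toReal hGm hGfin]
          refine integral_congr_ae (Filter.Eventually.of_forall fun ω => ?_)
          show (∑' l : Λ, ((‖F (ω + (l : Γ))‖₊ : ENNReal)) ^ 2).toReal
            = ∑' l : Λ, ‖F (ω + (l : Γ))‖ ^ 2
          rw [ENNReal.tsum_toReal_eq
            (fun l => (ENNReal.pow_lt_top ENNReal.coe_lt_top).ne)]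
          refine tsum_congr fun l => ?_
          simp [ENNReal.toReal_pow]
  · -- (2) surjectivity
    intro Φ hΦ hΦfin
    let m : Γ → Λ := fun x => ⟨(P x).2, hPΛ x⟩
    have hm : ∀ ω ∈ D, ∀ l : Λ, m (ω + (l : Γ)) = l := by
      intro ω hω l
      refine Subtype.ext ?_
      show (P (ω + (l : Γ))).2 = (l : Γ)
      rw [hPkey ω hω _ l.2]
    have hmΛ : Measurable m := by
      apply measurable_to_countable'
      intro l
      have hset : m ⁻¹' {l} = (fun x => x - (l : Γ)) ⁻¹' D := by
        ext x
        simp only [Set.mem_preimage, Set.mem_singleton_iff]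
        constructor
        · intro h
          have h2 : (P x).2 = (l : Γ) := congrArg Subtype.val h
          have hx := hPx x
          rw [h2] at hx
          rw [hx, add_sub_cancel_right]
          exact hPD x
        · intro h
          have := hm (x - (l : Γ)) h l
          rwa [sub_add_cancel] at this
      rw [hset]
      exact (measurable_sub_const _) hDm
    let F : Γ → ℂ := fun x => Φ (x - ((m x : Λ) : Γ)) (m x)
    have hf' : Measurable (fun p : Γ × Λ => Φ (p.1 - ((p.2 : Λ) : Γ)) p.2) :=
      measurable_from_prod_countable_left fun l => by
        show Measurable fun x : Γ => Φ (x - (l : Γ)) l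
        exact (hΦ l).comp (measurable_sub_const _)
    have hFm : Measurable F := hf'.comp (measurable_id.prodMk hmΛ)
    have hFΦ : ∀ ω ∈ D, ∀ l : Λ, F (ω + (l : Γ)) = Φ ω l := by
      intro ω hω l
      show Φ (ω + (l : Γ) - ((m (ω + (l : Γ)) : Λ) : Γ)) (m (ω + (l : Γ))) = Φ ω l
      rw [hm ω hω l, add_sub_cancel_right]
    have hfin : ∫⁻ x, ((‖F x‖₊ : ENNReal)) ^ 2 ∂μ < ⊤ := by
      rw [hkey F hFm.aemeasurable]
      have : ∫⁻ ω in D, ∑' l : Λ, ((‖F (ω + (l : Γ))‖₊ : ENNReal)) ^ 2 ∂μ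
          = ∫⁻ ω in D, ∑' l : Λ, ((‖Φ ω l‖₊ : ENNReal)) ^ 2 ∂μ := by
        refine setLIntegral_congr_fun hDm
          (fun ω hω => ?_)
        exact tsum_congr fun l => by rw [hFΦ ω hω l]
      rw [this]
      exact hΦfin
    refine ⟨F, (hmem F hFm.aestronglyMeasurable).mpr hfin, ?_⟩
    filter_upwards [ae_restrict_mem hDm] with ω hω
    exact hFΦ ω hω
  · -- (3) character intertwining
    rintro e ⟨-, -, hmul, htriv⟩ F
    refine Filter.Eventually.of_forall fun ω l => ?_
    rw [hmul, htriv _ l.2, mul_one]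
end
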